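/- Let F be a set of functions on Baire space containing all 1-Lipschitz functions (with respect to the standard metric d(x,y) = 2^{-n} for n least with x(n) ≠ y(n)) and closed under composition, and assume SLO^F. If A ⊆ ℝ satisfies A ≰_F ℝ∖A, then the set A ⊕ ¬A is F-selfdual, i.e., A ⊕ ¬A ≤_F ℝ∖(A ⊕ ¬A), and A <_F A ⊕ ¬A and ℝ∖A <_F A ⊕ ¬A. -/

import Mathlib

open scoped Classical

/-- Prepend `n` to the sequence `x`. -/
def consSeq (n : ℕ) (x : ℕ → ℕ) : ℕ → ℕ := fun i => if i = 0 then n else x (i - 1)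

/-- The standard metric on Baire space: `d x y = (1/2)^m` where `m` is least
with `x m ≠ y m`, and `0` if `x = y`. -/
noncomputable def bd (x y : ℕ → ℕ) : ℝ :=
  if h : x = y then 0 else (1 / 2 : ℝ) ^ (Nat.find (Function.ne_iff.mp h))

/-- `f` is Lipschitz with constant `C` with respect to `bd`. -/
def LipWith (C : ℝ) (f : (ℕ → ℕ) → ℕ → ℕ) : Prop :=
  ∀ x y, bd (f x) (f y) ≤ C * bd x y

/-- `A ⊕ B = {⟨2k⟩⌢x : x ∈ A} ∪ {⟨2k+1⟩⌢x : x ∈ B}`. -/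
def oplus (A B : Set (ℕ → ℕ)) : Set (ℕ → ℕ) :=
  {z | ∃ k x, x ∈ A ∧ z = consSeq (2 * k) x} ∪
  {z | ∃ k x, x ∈ B ∧ z = consSeq (2 * k + 1) x}

/-- `A` is `F`-reducible to `B`. -/
def Red (F : Set ((ℕ → ℕ) → (ℕ → ℕ))) (A B : Set (ℕ → ℕ)) : Prop :=
  ∃ f ∈ F, A = f ⁻¹' B

lemma bd_nonneg (x y : ℕ → ℕ) : 0 ≤ bd x y := by
  unfold bd; split
  · exact le_refl 0
  · positivity

/-- A function preserving agreement of prefixes is 1-Lipschitz. -/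
lemma lipWith_one_of (f : (ℕ → ℕ) → ℕ → ℕ)
    (h : ∀ x y : ℕ → ℕ, ∀ n, (∀ i < n, x i = y i) → ∀ i < n, f x i = f y i) :
    LipWith 1 f := by
  intro x y
  rw [one_mul]
  by_cases hfe : f x = f y
  · rw [bd, dif_pos hfe]; exact bd_nonneg x y
  · have hxy : x ≠ y := by rintro rfl; exact hfe rfl
    rw [bd, bd, dif_neg hfe, dif_neg hxy]
    apply pow_le_pow_of_le_one (by norm_num) (by norm_num)
    have hag : ∀ i < Nat.find (Function.ne_iff.mp hxy), x i = y i := fun i hi => by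
      have := Nat.find_min (Function.ne_iff.mp hxy) hi
      simpa using this
    have hf := h x y _ hag
    exact (Nat.le_find_iff _ _).mpr fun m hm => by simpa using hf m hm

lemma mem_oplus {A B : Set (ℕ → ℕ)} {z : ℕ → ℕ} :
    z ∈ oplus A B ↔
      (z 0 % 2 = 0 ∧ (fun i => z (i + 1)) ∈ A) ∨
      (z 0 % 2 = 1 ∧ (fun i => z (i + 1)) ∈ B) := by
  constructor
  · rintro (⟨k, x, hx, rfl⟩ | ⟨k, x, hx, rfl⟩)
    · left
      refine ⟨by simp [consSeq], ?_⟩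
      convert hx using 1; funext i; simp [consSeq]
    · right
      refine ⟨by simp [consSeq], ?_⟩
      convert hx using 1; funext i; simp [consSeq]
  · have hz : ∀ m : ℕ, z 0 = m → z = consSeq m (fun i => z (i + 1)) := by
      rintro m rfl; funext i; cases i with
      | zero => simp [consSeq]
      | succ j => simp [consSeq]
    rintro (⟨h0, hA⟩ | ⟨h0, hB⟩)
    · exact Or.inl ⟨z 0 / 2, _, hA, hz _ (by omega)⟩
    · exact Or.inr ⟨z 0 / 2, _, hB, hz _ (by omega)⟩

lemma lip_consSeq (n : ℕ) : LipWith 1 (consSeq n) := by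
  apply lipWith_one_of
  intro x y m hag i hi
  rcases i with _ | j
  · simp [consSeq]
  · simp only [consSeq]
    simp only [Nat.succ_ne_zero, if_false]
    exact hag j (by omega)

lemma consSeq_preimage (n : ℕ) (A B : Set (ℕ → ℕ)) :
    (consSeq n) ⁻¹' (oplus A B) = if n % 2 = 0 then A else B := by
  ext x
  have ht : (fun i => consSeq n x (i + 1)) = x := by funext i; simp [consSeq]
  simp only [Set.mem_preimage, mem_oplus, ht]
  have h0 : consSeq n x 0 = n := by simp [consSeq]
  rw [h0]
  rcases Nat.even_or_odd n with he | ho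
  · have : n % 2 = 0 := Nat.even_iff.mp he
    simp [this]
  · have : n % 2 = 1 := Nat.odd_iff.mp ho
    simp [this]

/-- The parity-swapping map. -/
def swapF : (ℕ → ℕ) → ℕ → ℕ :=
  fun z i => if i = 0 then (if z 0 % 2 = 0 then z 0 + 1 else z 0 - 1) else z i

lemma lip_swapF : LipWith 1 swapF := by
  apply lipWith_one_of
  intro x y m hag i hi
  rcases i with _ | j
  · have h0 : x 0 = y 0 := hag 0 (by omega)
    simp [swapF, h0]
  · simp only [swapF, Nat.succ_ne_zero, if_false]
    exact hag (j + 1) hi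

theorem stmt3 (F : Set ((ℕ → ℕ) → (ℕ → ℕ)))
    (hcomp : ∀ f ∈ F, ∀ g ∈ F, f ∘ g ∈ F)
    (hLip1 : {f | LipWith 1 f} ⊆ F)
    (hSLO : ∀ A B : Set (ℕ → ℕ), Red F A B ∨ Red F Bᶜ A)
    (A : Set (ℕ → ℕ)) (hA : ¬ Red F A Aᶜ) :
    Red F (oplus A Aᶜ) (oplus A Aᶜ)ᶜ ∧
    (Red F A (oplus A Aᶜ) ∧ ¬ Red F (oplus A Aᶜ) A) ∧
    (Red F Aᶜ (oplus A Aᶜ) ∧ ¬ Red F (oplus A Aᶜ) Aᶜ) := by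
  have hc0 : consSeq 0 ∈ F := hLip1 (lip_consSeq 0)
  have hc1 : consSeq 1 ∈ F := hLip1 (lip_consSeq 1)
  have hredA : Red F A (oplus A Aᶜ) :=
    ⟨consSeq 0, hc0, by rw [consSeq_preimage]; simp⟩
  have hredAc : Red F Aᶜ (oplus A Aᶜ) :=
    ⟨consSeq 1, hc1, by rw [consSeq_preimage]; simp⟩
  refine ⟨?_, ⟨hredA, ?_⟩, ⟨hredAc, ?_⟩⟩
  · refine ⟨swapF, hLip1 lip_swapF, ?_⟩
    ext z
    have ht : (fun i => swapF z (i + 1)) = fun i => z (i + 1) := by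
      funext i; simp [swapF]
    have h0 : swapF z 0 = if z 0 % 2 = 0 then z 0 + 1 else z 0 - 1 := by simp [swapF]
    simp only [Set.mem_preimage, Set.mem_compl_iff, mem_oplus, ht, h0, Set.mem_compl_iff]
    by_cases hp : z 0 % 2 = 0 <;> by_cases hm : (fun i => z (i + 1)) ∈ A <;>
      simp [hp, hm] <;> omega
  · rintro ⟨f, hf, hpre⟩
    apply hA
    -- Aᶜ = (f ∘ consSeq 1)⁻¹' A, so A = (f ∘ consSeq 1)⁻¹' Aᶜ
    have h1 : Aᶜ = (f ∘ consSeq 1) ⁻¹' A := by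
      rw [Set.preimage_comp, ← hpre, consSeq_preimage]; simp
    refine ⟨f ∘ consSeq 1, hcomp f hf _ hc1, ?_⟩
    rw [Set.preimage_compl, ← h1, compl_compl]
  · rintro ⟨f, hf, hpre⟩
    apply hA
    refine ⟨f ∘ consSeq 0, hcomp f hf _ hc0, ?_⟩
    rw [Set.preimage_comp, ← hpre, consSeq_preimage]; simp
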